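/- Let G be a finite graph, v a vertex, D* a set with v ∉ N[D*], S = T \ (N[D*] ∪ {v}) where T \ N[D*] ⊆ N[v] (so T \ N[D*] = S ∪ {v}). Then every inclusion-wise minimal set X dominating S ∪ {v} is of the form Q ∪ {w} for some w ∈ N[v] ∩ X and some inclusion-wise minimal set Q dominating S \ N[w]. -/
import Mathlib


open Set

variable {V : Type*}

/-- The closed neighborhood of a set of vertices: `N[X]`. -/
def closedNbhd (G : SimpleGraph V) (X : Set V) : Set V :=
  {y | ∃ x ∈ X, y = x ∨ G.Adj x y}

/-- `X` dominates `A` in `G`: `A ⊆ N[X]`. -/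
def Dominates (G : SimpleGraph V) (X A : Set V) : Prop :=
  A ⊆ closedNbhd G X

/-- `X` is an inclusion-wise minimal set dominating `A` in `G`. -/
def MinDom (G : SimpleGraph V) (X A : Set V) : Prop :=
  Dominates G X A ∧ ∀ Y, Y ⊂ X → ¬ Dominates G Y A

/-- `S` is an independent set in `G`. -/
def IndepSet (G : SimpleGraph V) (S : Set V) : Prop :=
  S.Pairwise fun x y => ¬ G.Adj x y

theorem stmt_10 [Fintype V] (G : SimpleGraph V) (v : V) (Dstar T S X : Set V)
    (hv : v ∉ closedNbhd G Dstar)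
    (hT : T \ closedNbhd G Dstar ⊆ closedNbhd G {v})
    (hSdef : S = T \ (closedNbhd G Dstar ∪ {v}))
    (hX : MinDom G X (S ∪ {v})) :
    ∃ w ∈ closedNbhd G {v} ∩ X, ∃ Q,
      MinDom G Q (S \ closedNbhd G {w}) ∧ X = Q ∪ {w} := by
  obtain ⟨hXdom, hXmin⟩ := hX
  -- v is dominated by some w ∈ X
  obtain ⟨w, hwX, hwv⟩ := hXdom (Or.inr rfl)
  refine ⟨w, ⟨⟨v, rfl, ?_⟩, hwX⟩, X \ {w}, ⟨?_, ?_⟩, ?_⟩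
  · rcases hwv with h | h
    · exact Or.inl h.symm
    · exact Or.inr h.symm
  · -- X \ {w} dominates S \ N[w]
    intro s hs
    obtain ⟨x, hxX, hxs⟩ := hXdom (Or.inl hs.1)
    refine ⟨x, ⟨hxX, ?_⟩, hxs⟩
    rintro rfl
    exact hs.2 ⟨x, rfl, hxs⟩
  · -- minimality
    intro Y hY hYdom
    have hYw : Y ∪ {w} ⊂ X := by
      constructor
      · rintro y (hy | rfl)
        · exact (hY.1 hy).1
        · exact hwX
      · obtain ⟨q, hqQ, hqY⟩ := Set.exists_of_ssubset hY
        intro hsub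
        exact hqY ((hsub hqQ.1).resolve_right hqQ.2)
    refine hXmin _ hYw ?_
    rintro s (hs | rfl)
    · by_cases hsw : s ∈ closedNbhd G {w}
      · obtain ⟨x, hx, hxs⟩ := hsw
        exact ⟨w, Or.inr rfl, by rwa [← hx]⟩
      · obtain ⟨x, hxY, hxs⟩ := hYdom ⟨hs, hsw⟩
        exact ⟨x, Or.inl hxY, hxs⟩
    · exact ⟨w, Or.inr rfl, hwv⟩
  · -- X = (X \ {w}) ∪ {w}
    rw [Set.diff_union_self]
    exact (Set.union_eq_self_of_subset_right (by simpa using hwX)).symm
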